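/- Cauchy sets are acausal: in an approximating Lorentzian pre-length space with limit curves over a proper metric space, if S is a Cauchy set and p, q ∈ S with p < q, then a contradiction follows; i.e., no two distinct points of S are causally related. -/
import Mathlib


open Set Filter Topology MeasureTheory TopologicalSpace

/-- A Lorentzian pre-length space structure on a metric space `X`:
a preorder `causal` (≤), a transitive relation `chron` (≪) contained in `causal`,
and a lower semicontinuous time separation function `tau` satisfying the usual axioms. -/
structure LPLS (X : Type*) [MetricSpace X] where
  causal : X → X → Prop
  chron : X → X → Prop
  tau : X → X → ENNReal
  causal_refl : ∀ x, causal x x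
  causal_trans : ∀ {x y z}, causal x y → causal y z → causal x z
  chron_trans : ∀ {x y z}, chron x y → chron y z → chron x z
  chron_subset_causal : ∀ {x y}, chron x y → causal x y
  tau_lsc : LowerSemicontinuous fun p : X × X => tau p.1 p.2
  tau_pos : ∀ {x y}, chron x y → 0 < tau x y
  tau_eq_zero : ∀ {x y}, ¬ causal x y → tau x y = 0
  tau_superadd : ∀ {x y z}, causal x y → causal y z → tau x y + tau y z ≤ tau x z

variable {X : Type*} [MetricSpace X]

namespace LPLS

/-- chronological future `I⁺(p)` -/
def Iplus (L : LPLS X) (p : X) : Set X := {x | L.chron p x}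
/-- chronological past `I⁻(p)` -/
def Iminus (L : LPLS X) (p : X) : Set X := {x | L.chron x p}
/-- causal future `J⁺(p)` -/
def Jplus (L : LPLS X) (p : X) : Set X := {x | L.causal p x}
/-- causal past `J⁻(p)` -/
def Jminus (L : LPLS X) (p : X) : Set X := {x | L.causal x p}

def IplusSet (L : LPLS X) (S : Set X) : Set X := ⋃ p ∈ S, L.Iplus p
def IminusSet (L : LPLS X) (S : Set X) : Set X := ⋃ p ∈ S, L.Iminus p
def JplusSet (L : LPLS X) (S : Set X) : Set X := ⋃ p ∈ S, L.Jplus p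
def JminusSet (L : LPLS X) (S : Set X) : Set X := ⋃ p ∈ S, L.Jminus p

/-- a map is locally Lipschitz on a set `I` -/
def LocLipOn (I : Set ℝ) (γ : ℝ → X) : Prop :=
  ∀ s ∈ I, ∃ K : NNReal, ∃ U ∈ nhdsWithin s I, LipschitzOnWith K γ U

/-- future-directed causal curve with parameter domain `I`:
non-constant, locally Lipschitz and monotone with respect to the causal relation. -/
def IsCausalCurveOn (L : LPLS X) (I : Set ℝ) (γ : ℝ → X) : Prop :=
  (¬ ∀ s ∈ I, ∀ t ∈ I, γ s = γ t) ∧ LocLipOn I γ ∧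
    ∀ ⦃s⦄, s ∈ I → ∀ ⦃t⦄, t ∈ I → s < t → L.causal (γ s) (γ t)

/-- future-directed timelike curve with parameter domain `I`. -/
def IsTimelikeCurveOn (L : LPLS X) (I : Set ℝ) (γ : ℝ → X) : Prop :=
  (¬ ∀ s ∈ I, ∀ t ∈ I, γ s = γ t) ∧ LocLipOn I γ ∧
    ∀ ⦃s⦄, s ∈ I → ∀ ⦃t⦄, t ∈ I → s < t → L.chron (γ s) (γ t)

/-- causal path-connectedness -/
def CausallyPathConnected (L : LPLS X) : Prop :=
  (∀ p q : X, L.causal p q → p ≠ q →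
    ∃ γ : ℝ → X, L.IsCausalCurveOn (Icc 0 1) γ ∧ γ 0 = p ∧ γ 1 = q) ∧
  (∀ p q : X, L.chron p q →
    ∃ γ : ℝ → X, L.IsTimelikeCurveOn (Icc 0 1) γ ∧ γ 0 = p ∧ γ 1 = q)

/-- the relation `≤_U`: connected by a causal curve inside `U` -/
def causalIn (L : LPLS X) (U : Set X) (p q : X) : Prop :=
  ∃ γ : ℝ → X, L.IsCausalCurveOn (Icc 0 1) γ ∧ γ 0 = p ∧ γ 1 = q ∧
    ∀ s ∈ Icc (0:ℝ) 1, γ s ∈ U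

/-- every point has a neighbourhood `U` such that `≤_U` is closed -/
def LocallyWeaklyCausallyClosed (L : LPLS X) : Prop :=
  ∀ p : X, ∃ U ∈ 𝓝 p, IsClosed {z : X × X | L.causalIn U z.1 z.2}

/-- `d`-compatibility: local uniform bound for the `d`-arclength of causal curves -/
def DCompatible (L : LPLS X) : Prop :=
  ∀ p : X, ∃ U ∈ 𝓝 p, ∃ C : ℝ, ∀ (I : Set ℝ) (γ : ℝ → X),
    L.IsCausalCurveOn I γ → (∀ s ∈ I, γ s ∈ U) → eVariationOn γ I ≤ ENNReal.ofReal C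

/-- a Lorentzian pre-length space with limit curves: causally path-connected,
locally weakly causally closed and `d`-compatible -/
def HasLimitCurves (L : LPLS X) : Prop :=
  L.CausallyPathConnected ∧ L.LocallyWeaklyCausallyClosed ∧ L.DCompatible

def FutureApproximating (L : LPLS X) : Prop := ∀ p : X, L.Jplus p ⊆ closure (L.Iplus p)
def PastApproximating (L : LPLS X) : Prop := ∀ p : X, L.Jminus p ⊆ closure (L.Iminus p)
def Approximating (L : LPLS X) : Prop := L.FutureApproximating ∧ L.PastApproximating

/-- non-total imprisonment: a uniform arclength bound for causal curves in any compact set -/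
def NonTotallyImprisoning (L : LPLS X) : Prop :=
  ∀ K : Set X, IsCompact K → ∃ C : ℝ, 0 < C ∧ ∀ (I : Set ℝ) (γ : ℝ → X),
    L.IsCausalCurveOn I γ → (∀ s ∈ I, γ s ∈ K) → eVariationOn γ I ≤ ENNReal.ofReal C

/-- future-inextendible (future-directed) causal curve, parametrized on `[0,∞)`;
by the analogue of [KuSa, Lemma 3.12] inextendibility is captured by the
nonexistence of the limit at `+∞`. -/
def IsFutureInextCurve (L : LPLS X) (γ : ℝ → X) : Prop :=
  L.IsCausalCurveOn (Ici 0) γ ∧ ∀ p : X, ¬ Tendsto γ atTop (𝓝 p)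

/-- past-inextendible (future-directed) causal curve, parametrized on `(-∞,0]`. -/
def IsPastInextCurve (L : LPLS X) (γ : ℝ → X) : Prop :=
  L.IsCausalCurveOn (Iic 0) γ ∧ ∀ p : X, ¬ Tendsto γ atBot (𝓝 p)

/-- doubly-inextendible causal curve, parametrized on all of `ℝ`. -/
def IsDoublyInextCurve (L : LPLS X) (γ : ℝ → X) : Prop :=
  L.IsCausalCurveOn univ γ ∧ (∀ p : X, ¬ Tendsto γ atTop (𝓝 p)) ∧
    (∀ p : X, ¬ Tendsto γ atBot (𝓝 p))

/-- a Cauchy set: every doubly-inextendible causal curve meets it exactly once -/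
def IsCauchySet (L : LPLS X) (S : Set X) : Prop :=
  ∀ γ : ℝ → X, L.IsDoublyInextCurve γ →
    (∃ u : ℝ, γ u ∈ S) ∧ ∀ u v : ℝ, γ u ∈ S → γ v ∈ S → γ u = γ v

/-- volume of the open `r`-thickening of `I⁻(p)` -/
noncomputable def Vminus (L : LPLS X) [MeasurableSpace X] (μ : Measure X) (r : ℝ) (p : X) : ℝ :=
  (μ (Metric.thickening r (L.Iminus p))).toReal

/-- the averaged past volume function `t⁻(p) = ∫₀¹ V⁻ᵣ(p) dr` (without the sign) -/
noncomputable def tminus (L : LPLS X) [MeasurableSpace X] (μ : Measure X) (p : X) : ℝ :=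
  ∫ r in Ioo (0:ℝ) 1, L.Vminus μ r p

/-- full support: every nonempty open set has positive measure -/
def FullSupport [MeasurableSpace X] (μ : Measure X) : Prop :=
  ∀ U : Set X, IsOpen U → U.Nonempty → 0 < μ U

end LPLS


namespace LPLS

variable {L : LPLS X}

set_option linter.unusedSectionVars false

lemma lipschitzOn_glue {γ : ℝ → X} {K₁ K₂ : NNReal} {a b m : ℝ}
    (h1 : LipschitzOnWith K₁ γ (Icc a m)) (h2 : LipschitzOnWith K₂ γ (Icc m b))
    (ham : a ≤ m) (hmb : m ≤ b) :
    LipschitzOnWith (max K₁ K₂) γ (Icc a b) := by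
  have key : ∀ x ∈ Icc a b, ∀ y ∈ Icc a b, x ≤ y →
      dist (γ x) (γ y) ≤ (max K₁ K₂ : NNReal) * dist x y := by
    intro x hx y hy hxy
    have hK1 : (K₁ : ℝ) ≤ (max K₁ K₂ : NNReal) := by
      exact_mod_cast le_max_left K₁ K₂
    have hK2 : (K₂ : ℝ) ≤ (max K₁ K₂ : NNReal) := by
      exact_mod_cast le_max_right K₁ K₂
    rcases le_total y m with hym | hmy
    · have := h1.dist_le_mul x ⟨hx.1, hxy.trans hym⟩ y ⟨hy.1, hym⟩
      calc dist (γ x) (γ y) ≤ K₁ * dist x y := this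
        _ ≤ _ := by
          apply mul_le_mul_of_nonneg_right hK1 dist_nonneg
    · rcases le_total m x with hmx | hxm
      · have := h2.dist_le_mul x ⟨hmx, hx.2⟩ y ⟨hmx.trans hxy, hy.2⟩
        calc dist (γ x) (γ y) ≤ K₂ * dist x y := this
          _ ≤ _ := by apply mul_le_mul_of_nonneg_right hK2 dist_nonneg
      · have t1 := h1.dist_le_mul x ⟨hx.1, hxm⟩ m ⟨ham, le_refl m⟩
        have t2 := h2.dist_le_mul m ⟨le_refl m, hmb⟩ y ⟨hmy, hy.2⟩
        have hd : dist x m + dist m y = dist x y := by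
          rw [Real.dist_eq, Real.dist_eq, Real.dist_eq,
            abs_of_nonpos (by linarith), abs_of_nonpos (by linarith),
            abs_of_nonpos (by linarith)]
          ring
        calc dist (γ x) (γ y) ≤ dist (γ x) (γ m) + dist (γ m) (γ y) := dist_triangle _ _ _
          _ ≤ K₁ * dist x m + K₂ * dist m y := add_le_add t1 t2
          _ ≤ (max K₁ K₂ : NNReal) * dist x m + (max K₁ K₂ : NNReal) * dist m y := by
              gcongr
          _ = (max K₁ K₂ : NNReal) * (dist x m + dist m y) := by ring
          _ = (max K₁ K₂ : NNReal) * dist x y := by rw [hd]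
  apply LipschitzOnWith.of_dist_le_mul
  intro x hx y hy
  rcases le_total x y with h | h
  · exact key x hx y hy h
  · rw [dist_comm (γ x), dist_comm x]
    exact key y hy x hx h

lemma concat_agree {c : ℤ → ℝ → X} (hmatch : ∀ n, c n 1 = c (n + 1) 0)
    (n : ℤ) {t : ℝ} (ht : t ∈ Icc (n : ℝ) (n + 1)) :
    c ⌊t⌋ (t - ⌊t⌋) = c n (t - n) := by
  rcases eq_or_lt_of_le ht.2 with h | h
  · have hfl : ⌊t⌋ = n + 1 := by
      rw [h, show ((n : ℝ) + 1) = ((n + 1 : ℤ) : ℝ) by push_cast; ring, Int.floor_intCast]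
    rw [hfl]
    have h1 : t - ((n + 1 : ℤ) : ℝ) = 0 := by push_cast; rw [h]; ring
    have h2 : t - (n : ℝ) = 1 := by rw [h]; ring
    rw [h1, h2, ← hmatch n]
  · have hfl : ⌊t⌋ = n := Int.floor_eq_iff.mpr ⟨ht.1, by push_cast; linarith⟩
    rw [hfl]

lemma concat_chain {c : ℤ → ℝ → X}
    (hc : ∀ n, L.IsCausalCurveOn (Icc 0 1) (c n))
    (hmatch : ∀ n, c n 1 = c (n + 1) 0) :
    ∀ a b : ℤ, a ≤ b → L.causal (c a 0) (c b 0) := by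
  intro a b hab
  have key : ∀ k : ℕ, L.causal (c a 0) (c (a + k) 0) := by
    intro k
    induction k with
    | zero => simpa using L.causal_refl (c a 0)
    | succ k ih =>
        refine L.causal_trans ih ?_
        rw [show a + ((k + 1 : ℕ) : ℤ) = (a + k) + 1 by push_cast; ring, ← hmatch (a + k)]
        exact (hc (a + k)).2.2 (left_mem_Icc.mpr zero_le_one)
          (right_mem_Icc.mpr zero_le_one) one_pos
  have hb : b = a + ((b - a).toNat : ℤ) := by omega
  rw [hb]; exact key _

lemma concat_causal {c : ℤ → ℝ → X}
    (hc : ∀ n, L.IsCausalCurveOn (Icc 0 1) (c n))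
    (hmatch : ∀ n, c n 1 = c (n + 1) 0)
    {s t : ℝ} (hst : s < t) :
    L.causal (c ⌊s⌋ (s - ⌊s⌋)) (c ⌊t⌋ (t - ⌊t⌋)) := by
  have hs1 : (0:ℝ) ≤ s - ⌊s⌋ := by have := Int.floor_le s; linarith
  have hs2 : s - ⌊s⌋ < 1 := by have := Int.lt_floor_add_one s; linarith
  have ht1 : (0:ℝ) ≤ t - ⌊t⌋ := by have := Int.floor_le t; linarith
  have ht2 : t - ⌊t⌋ < 1 := by have := Int.lt_floor_add_one t; linarith
  have hmn : ⌊s⌋ ≤ ⌊t⌋ := Int.floor_le_floor hst.le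
  rcases eq_or_lt_of_le hmn with h | h
  · rw [← h]
    have ht1' : (0:ℝ) ≤ t - ⌊s⌋ := by rw [h]; exact ht1
    have ht2' : t - (⌊s⌋:ℝ) ≤ 1 := by rw [h]; exact ht2.le
    exact (hc ⌊s⌋).2.2 ⟨hs1, hs2.le⟩ ⟨ht1', ht2'⟩ (by linarith)
  · have c1 : L.causal (c ⌊s⌋ (s - ⌊s⌋)) (c ⌊s⌋ 1) :=
      (hc ⌊s⌋).2.2 ⟨hs1, hs2.le⟩ (right_mem_Icc.mpr zero_le_one) hs2
    have c2 : L.causal (c (⌊s⌋ + 1) 0) (c ⌊t⌋ 0) := concat_chain hc hmatch _ _ h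
    have c3 : L.causal (c ⌊t⌋ 0) (c ⌊t⌋ (t - ⌊t⌋)) := by
      rcases eq_or_lt_of_le ht1 with h0 | h0
      · rw [← h0]; exact L.causal_refl _
      · exact (hc ⌊t⌋).2.2 (left_mem_Icc.mpr zero_le_one) ⟨ht1, ht2.le⟩ h0
    exact L.causal_trans c1 (by rw [hmatch ⌊s⌋]; exact L.causal_trans c2 c3)

lemma concat_lip_transfer {c : ℤ → ℝ → X} (hmatch : ∀ n, c n 1 = c (n + 1) 0)
    {n : ℤ} {K : NNReal} {V : Set ℝ} (hV : LipschitzOnWith K (c n) V)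
    {W : Set ℝ} (hW : W ⊆ Icc (n : ℝ) (n + 1)) (him : ∀ w ∈ W, w - n ∈ V) :
    LipschitzOnWith K (fun t => c ⌊t⌋ (t - ⌊t⌋)) W := by
  apply LipschitzOnWith.of_dist_le_mul
  intro x hx y hy
  show dist (c ⌊x⌋ (x - ⌊x⌋)) (c ⌊y⌋ (y - ⌊y⌋)) ≤ K * dist x y
  rw [concat_agree hmatch n (hW hx), concat_agree hmatch n (hW hy)]
  calc dist (c n (x - n)) (c n (y - n)) ≤ K * dist (x - n) (y - n) :=
        hV.dist_le_mul _ (him x hx) _ (him y hy)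
    _ = K * dist x y := by rw [dist_sub_right]

lemma concat_locLip {c : ℤ → ℝ → X}
    (hc : ∀ n, L.IsCausalCurveOn (Icc 0 1) (c n))
    (hmatch : ∀ n, c n 1 = c (n + 1) 0) :
    LocLipOn univ (fun t => c ⌊t⌋ (t - ⌊t⌋)) := by
  intro s _
  rw [nhdsWithin_univ]
  by_cases hs : ∃ n : ℤ, (n : ℝ) = s
  · obtain ⟨n, rfl⟩ := hs
    obtain ⟨K₁, U₁, hU₁, hL₁⟩ := (hc (n - 1)).2.1 1 (right_mem_Icc.mpr zero_le_one)
    obtain ⟨K₂, U₂, hU₂, hL₂⟩ := (hc n).2.1 0 (left_mem_Icc.mpr zero_le_one)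
    obtain ⟨ε₁, hε₁, hb₁⟩ := Metric.mem_nhdsWithin_iff.mp hU₁
    obtain ⟨ε₂, hε₂, hb₂⟩ := Metric.mem_nhdsWithin_iff.mp hU₂
    set δ₁ := min ε₁ 1 / 2 with hδ₁def
    set δ₂ := min ε₂ 1 / 2 with hδ₂def
    have hδ₁ : 0 < δ₁ := by positivity
    have hδ₂ : 0 < δ₂ := by positivity
    have hδ₁ε : δ₁ < ε₁ := by
      have : min ε₁ 1 ≤ ε₁ := min_le_left _ _
      rw [hδ₁def]; linarith
    have hδ₂ε : δ₂ < ε₂ := by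
      have : min ε₂ 1 ≤ ε₂ := min_le_left _ _
      rw [hδ₂def]; linarith
    have hδ₁1 : δ₁ ≤ 1 := by
      have : min ε₁ 1 ≤ 1 := min_le_right _ _
      rw [hδ₁def]; linarith
    have hδ₂1 : δ₂ ≤ 1 := by
      have : min ε₂ 1 ≤ 1 := min_le_right _ _
      rw [hδ₂def]; linarith
    have h1 : LipschitzOnWith K₁ (fun t => c ⌊t⌋ (t - ⌊t⌋)) (Icc ((n : ℝ) - δ₁) n) := by
      apply concat_lip_transfer hmatch (n := n - 1) (hL₁.mono hb₁)
      · intro w hw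
        push_cast
        constructor <;> [linarith [hw.1]; linarith [hw.2]]
      · intro w hw
        push_cast
        refine ⟨?_, ?_, ?_⟩
        · rw [Metric.mem_ball, Real.dist_eq]
          have habs : |w - ((n : ℝ) - 1) - 1| ≤ δ₁ := by
            rw [abs_le]; constructor <;> [linarith [hw.1]; linarith [hw.2]]
          linarith
        · linarith [hw.1]
        · linarith [hw.2]
    have h2 : LipschitzOnWith K₂ (fun t => c ⌊t⌋ (t - ⌊t⌋)) (Icc (n : ℝ) ((n : ℝ) + δ₂)) := by
      apply concat_lip_transfer hmatch (n := n) (hL₂.mono hb₂)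
      · intro w hw
        constructor <;> [linarith [hw.1]; linarith [hw.2]]
      · intro w hw
        refine ⟨?_, ?_, ?_⟩
        · rw [Metric.mem_ball, Real.dist_eq]
          have habs : |w - (n : ℝ) - 0| ≤ δ₂ := by
            rw [abs_le]; constructor <;> [linarith [hw.1]; linarith [hw.2]]
          linarith
        · linarith [hw.1]
        · linarith [hw.2]
    refine ⟨max K₁ K₂, Icc ((n : ℝ) - δ₁) ((n : ℝ) + δ₂), ?_, ?_⟩
    · exact Icc_mem_nhds (by linarith) (by linarith)
    · exact lipschitzOn_glue h1 h2 (by linarith) (by linarith)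
  · have hne : (⌊s⌋ : ℝ) ≠ s := fun h => hs ⟨⌊s⌋, h⟩
    have h1 : (⌊s⌋ : ℝ) < s := (Int.floor_le s).lt_of_ne hne
    have h2 : s < (⌊s⌋ : ℝ) + 1 := Int.lt_floor_add_one s
    set u := s - (⌊s⌋ : ℝ) with hu
    have hu0 : 0 < u := by rw [hu]; linarith
    have hu1 : u < 1 := by rw [hu]; linarith
    obtain ⟨K, U, hU, hL⟩ := (hc ⌊s⌋).2.1 u ⟨hu0.le, hu1.le⟩
    obtain ⟨ε, hε, hb⟩ := Metric.mem_nhdsWithin_iff.mp hU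
    set δ := min ε (min u (1 - u)) with hδdef
    have hδ : 0 < δ := by
      rw [hδdef]
      exact lt_min hε (lt_min hu0 (by linarith))
    have hδε : δ ≤ ε := min_le_left _ _
    have hδu : δ ≤ u := (min_le_right _ _).trans (min_le_left _ _)
    have hδu1 : δ ≤ 1 - u := (min_le_right _ _).trans (min_le_right _ _)
    refine ⟨K, Icc (s - δ / 2) (s + δ / 2), Icc_mem_nhds (by linarith) (by linarith), ?_⟩
    apply concat_lip_transfer hmatch (n := ⌊s⌋) (hL.mono hb)
    · intro w hw
      constructor <;> [linarith [hw.1]; linarith [hw.2]]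
    · intro w hw
      refine ⟨?_, ?_, ?_⟩
      · rw [Metric.mem_ball, Real.dist_eq]
        have habs : |w - (⌊s⌋ : ℝ) - u| ≤ δ / 2 := by
          rw [abs_le, hu]; constructor <;> [linarith [hw.1]; linarith [hw.2]]
        linarith
      · linarith [hw.1]
      · linarith [hw.2]

lemma concat_isCausalCurve {c : ℤ → ℝ → X}
    (hc : ∀ n, L.IsCausalCurveOn (Icc 0 1) (c n))
    (hmatch : ∀ n, c n 1 = c (n + 1) 0)
    (hne : c 0 0 ≠ c 0 1) :
    L.IsCausalCurveOn univ (fun t => c ⌊t⌋ (t - ⌊t⌋)) := by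
  have hval : ∀ n : ℤ, c ⌊(n : ℝ)⌋ ((n : ℝ) - ⌊(n : ℝ)⌋) = c n 0 := by
    intro n; rw [Int.floor_intCast]; simp
  refine ⟨?_, concat_locLip hc hmatch, fun s _ t _ hst => concat_causal hc hmatch hst⟩
  intro h
  have h01 : c ⌊((0:ℤ):ℝ)⌋ (((0:ℤ):ℝ) - ⌊((0:ℤ):ℝ)⌋) =
      c ⌊((1:ℤ):ℝ)⌋ (((1:ℤ):ℝ) - ⌊((1:ℤ):ℝ)⌋) :=
    h ((0:ℤ):ℝ) (mem_univ _) ((1:ℤ):ℝ) (mem_univ _)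
  have hm := hmatch 0
  norm_num at hm
  rw [hval 0, hval 1, ← hm] at h01
  exact hne h01


lemma bddAbove_aux (x : X) (s : Set X) : BddAbove ((fun z => min (dist x z) 1) '' s) :=
  ⟨1, by rintro _ ⟨z, _, rfl⟩; exact min_le_right _ _⟩

noncomputable def Rp (L : LPLS X) (x : X) : ℝ :=
  sSup ((fun z => min (dist x z) 1) '' L.Jplus x)

noncomputable def Rm (L : LPLS X) (x : X) : ℝ :=
  sSup ((fun z => min (dist x z) 1) '' L.Jminus x)

lemma le_Rp {x z : X} (h : L.causal x z) : min (dist x z) 1 ≤ L.Rp x :=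
  le_csSup (bddAbove_aux x _) ⟨z, h, rfl⟩

lemma le_Rm {x z : X} (h : L.causal z x) : min (dist x z) 1 ≤ L.Rm x :=
  le_csSup (bddAbove_aux x _) ⟨z, h, rfl⟩

lemma exists_chron_gt (happ : L.Approximating) (hlc : L.HasLimitCurves) (x : X) :
    ∃ z, L.chron x z ∧ z ≠ x := by
  have hx : x ∈ closure (L.Iplus x) := happ.1 x (L.causal_refl x)
  have hnon : (L.Iplus x).Nonempty := by
    by_contra h
    rw [not_nonempty_iff_eq_empty] at h
    rw [h, closure_empty] at hx
    exact hx
  obtain ⟨w, hw⟩ := hnon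
  obtain ⟨σ, hσ, h0, h1⟩ := hlc.1.2 x w hw
  have hnc := hσ.1
  push_neg at hnc
  obtain ⟨s, hs, t, ht, hst⟩ := hnc
  have main : ∀ s ∈ Icc (0:ℝ) 1, ∀ t ∈ Icc (0:ℝ) 1, s < t → σ s ≠ σ t →
      ∃ z, L.chron x z ∧ z ≠ x := by
    intro s hs t ht hlt hne'
    by_cases hzt : σ t = x
    · have hsx : σ s ≠ x := by rw [← hzt]; exact hne'
      have hs0 : 0 < s := by
        rcases eq_or_lt_of_le hs.1 with h | h
        · exact absurd (by rw [← h, h0]) hsx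
        · exact h
      exact ⟨σ s, by rw [← h0]; exact hσ.2.2 (left_mem_Icc.mpr zero_le_one) hs hs0, hsx⟩
    · have ht0 : 0 < t := lt_of_le_of_lt hs.1 hlt
      exact ⟨σ t, by rw [← h0]; exact hσ.2.2 (left_mem_Icc.mpr zero_le_one) ht ht0, hzt⟩
  rcases lt_trichotomy s t with h | h | h
  · exact main s hs t ht h hst
  · exact absurd (by rw [h]) hst
  · exact main t ht s hs h (Ne.symm hst)

lemma exists_chron_lt (happ : L.Approximating) (hlc : L.HasLimitCurves) (x : X) :
    ∃ z, L.chron z x ∧ z ≠ x := by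
  have hx : x ∈ closure (L.Iminus x) := happ.2 x (L.causal_refl x)
  have hnon : (L.Iminus x).Nonempty := by
    by_contra h
    rw [not_nonempty_iff_eq_empty] at h
    rw [h, closure_empty] at hx
    exact hx
  obtain ⟨w, hw⟩ := hnon
  obtain ⟨σ, hσ, h0, h1⟩ := hlc.1.2 w x hw
  have hnc := hσ.1
  push_neg at hnc
  obtain ⟨s, hs, t, ht, hst⟩ := hnc
  have main : ∀ s ∈ Icc (0:ℝ) 1, ∀ t ∈ Icc (0:ℝ) 1, s < t → σ s ≠ σ t →
      ∃ z, L.chron z x ∧ z ≠ x := by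
    intro s hs t ht hlt hne'
    by_cases hzs : σ s = x
    · have htx : σ t ≠ x := by rw [← hzs]; exact (Ne.symm hne')
      have ht1 : t < 1 := by
        rcases eq_or_lt_of_le ht.2 with h | h
        · exact absurd (by rw [h, h1]) htx
        · exact h
      exact ⟨σ t, by rw [← h1]; exact hσ.2.2 ht (right_mem_Icc.mpr zero_le_one) ht1, htx⟩
    · have hs1 : s < 1 := lt_of_lt_of_le hlt ht.2
      exact ⟨σ s, by rw [← h1]; exact hσ.2.2 hs (right_mem_Icc.mpr zero_le_one) hs1, hzs⟩
  rcases lt_trichotomy s t with h | h | h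
  · exact main s hs t ht h hst
  · exact absurd (by rw [h]) hst
  · exact main t ht s hs h (Ne.symm hst)

lemma Rp_pos (happ : L.Approximating) (hlc : L.HasLimitCurves) (x : X) : 0 < L.Rp x := by
  obtain ⟨z, hz, hzx⟩ := exists_chron_gt happ hlc x
  have h : 0 < min (dist x z) 1 := lt_min (dist_pos.mpr (Ne.symm hzx)) one_pos
  exact lt_of_lt_of_le h (le_Rp (L.chron_subset_causal hz))

lemma Rm_pos (happ : L.Approximating) (hlc : L.HasLimitCurves) (x : X) : 0 < L.Rm x := by
  obtain ⟨z, hz, hzx⟩ := exists_chron_lt happ hlc x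
  have h : 0 < min (dist x z) 1 := lt_min (dist_pos.mpr (Ne.symm hzx)) one_pos
  exact lt_of_lt_of_le h (le_Rm (L.chron_subset_causal hz))

lemma exists_good_succ (happ : L.Approximating) (hlc : L.HasLimitCurves) (x : X) :
    ∃ z, L.causal x z ∧ x ≠ z ∧ L.Rp x / 2 ≤ min (dist x z) 1 := by
  have hpos := Rp_pos happ hlc x
  have hlt : L.Rp x / 2 < L.Rp x := by linarith
  have hlt' : L.Rp x / 2 < sSup ((fun z => min (dist x z) 1) '' L.Jplus x) := hlt
  obtain ⟨y, hy, hlty⟩ := exists_lt_of_lt_csSup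
    (⟨min (dist x x) 1, ⟨x, L.causal_refl x, rfl⟩⟩ :
      ((fun z => min (dist x z) 1) '' L.Jplus x).Nonempty) hlt'
  obtain ⟨z, hz, rfl⟩ := hy
  have hd : 0 < min (dist x z) 1 := lt_of_le_of_lt (by positivity) hlty
  exact ⟨z, hz, dist_pos.mp (lt_min_iff.mp hd).1, hlty.le⟩

lemma exists_good_pred (happ : L.Approximating) (hlc : L.HasLimitCurves) (x : X) :
    ∃ z, L.causal z x ∧ x ≠ z ∧ L.Rm x / 2 ≤ min (dist x z) 1 := by
  have hpos := Rm_pos happ hlc x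
  have hlt : L.Rm x / 2 < L.Rm x := by linarith
  have hlt' : L.Rm x / 2 < sSup ((fun z => min (dist x z) 1) '' L.Jminus x) := hlt
  obtain ⟨y, hy, hlty⟩ := exists_lt_of_lt_csSup
    (⟨min (dist x x) 1, ⟨x, L.causal_refl x, rfl⟩⟩ :
      ((fun z => min (dist x z) 1) '' L.Jminus x).Nonempty) hlt'
  obtain ⟨z, hz, rfl⟩ := hy
  have hd : 0 < min (dist x z) 1 := lt_of_le_of_lt (by positivity) hlty
  exact ⟨z, hz, dist_pos.mp (lt_min_iff.mp hd).1, hlty.le⟩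

end LPLS

/-- Cauchy sets are acausal: no two distinct points of a Cauchy set are causally
related. -/
theorem LPLS.cauchySet_acausal {X : Type*} [MetricSpace X] [ProperSpace X]
    (L : LPLS X) (happ : L.Approximating) (hlc : L.HasLimitCurves)
    {S : Set X} (hS : L.IsCauchySet S) :
    ∀ p ∈ S, ∀ q ∈ S, L.causal p q → p = q := by
  intro p hp q hq hpq
  by_contra hne
  choose fs hfs1 hfs2 hfs3 using fun x => exists_good_succ (L := L) happ hlc x
  choose fp hfp1 hfp2 hfp3 using fun x => exists_good_pred (L := L) happ hlc x
  set qq : ℤ → X := fun n => if 1 ≤ n then fs^[(n - 1).toNat] q else fp^[(-n).toNat] p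
    with hqq
  have hq0 : qq 0 = p := by simp [hqq]
  have hq1 : qq 1 = q := by simp [hqq]
  have hstepF : ∀ n : ℤ, 1 ≤ n → qq (n + 1) = fs (qq n) := by
    intro n hn
    simp only [hqq]
    rw [if_pos (by omega : (1:ℤ) ≤ n + 1), if_pos hn]
    rw [show (n + 1 - 1).toNat = (n - 1).toNat + 1 by omega, Function.iterate_succ_apply']
  have hstepB : ∀ n : ℤ, n ≤ -1 → qq n = fp (qq (n + 1)) := by
    intro n hn
    simp only [hqq]
    rw [if_neg (by omega), if_neg (by omega)]
    rw [show (-n).toNat = (-(n + 1)).toNat + 1 by omega, Function.iterate_succ_apply']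
  have hcaus : ∀ n : ℤ, L.causal (qq n) (qq (n + 1)) ∧ qq n ≠ qq (n + 1) := by
    intro n
    rcases lt_trichotomy n 0 with h | h | h
    · rw [hstepB n (by omega)]
      exact ⟨hfp1 _, Ne.symm (hfp2 _)⟩
    · rw [h]
      rw [show (0:ℤ) + 1 = 1 from rfl, hq0, hq1]
      exact ⟨hpq, hne⟩
    · rw [hstepF n (by omega)]
      exact ⟨hfs1 _, hfs2 _⟩
  have hRpF : ∀ n : ℤ, 1 ≤ n → L.Rp (qq n) / 2 ≤ min (dist (qq n) (qq (n + 1))) 1 := by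
    intro n hn; rw [hstepF n hn]; exact hfs3 _
  have hRmB : ∀ n : ℤ, n ≤ -1 → L.Rm (qq (n + 1)) / 2 ≤ min (dist (qq (n + 1)) (qq n)) 1 := by
    intro n hn; rw [hstepB n hn]; exact hfp3 _
  have hcur : ∀ n : ℤ, ∃ σ : ℝ → X, L.IsCausalCurveOn (Icc 0 1) σ ∧ σ 0 = qq n ∧
      σ 1 = qq (n + 1) := fun n => hlc.1.1 (qq n) (qq (n + 1)) (hcaus n).1 (hcaus n).2
  choose c hcC hc0 hc1 using hcur
  have hmatch : ∀ n, c n 1 = c (n + 1) 0 := fun n => by rw [hc1 n, hc0 (n + 1)]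
  set γ : ℝ → X := fun t => c ⌊t⌋ (t - ⌊t⌋) with hγ
  have hγint : ∀ n : ℤ, γ ((n : ℤ) : ℝ) = qq n := by
    intro n
    show c ⌊((n:ℤ):ℝ)⌋ (((n:ℤ):ℝ) - ⌊((n:ℤ):ℝ)⌋) = qq n
    rw [Int.floor_intCast, sub_self, hc0]
  have hTop : ∀ r : X, ¬ Tendsto γ atTop (𝓝 r) := by
    intro r hr
    obtain ⟨z, hz, hzr⟩ := exists_chron_gt (L := L) happ hlc r
    have hq' : Tendsto (fun k : ℕ => qq ((k : ℤ))) atTop (𝓝 r) := by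
      have hbase : Tendsto (fun k : ℕ => ((k : ℕ) : ℝ)) atTop atTop :=
        tendsto_natCast_atTop_atTop
      have h1 : Tendsto (fun k : ℕ => (((k : ℤ)) : ℝ)) atTop atTop :=
        hbase.congr (fun k => by push_cast; ring)
      have h2 : Tendsto (fun k : ℕ => γ (((k : ℤ)) : ℝ)) atTop (𝓝 r) := hr.comp h1
      simpa only [hγint] using h2
    have htau : ∀ᶠ y in 𝓝 ((r, z) : X × X), 0 < L.tau y.1 y.2 :=
      L.tau_lsc (r, z) 0 (L.tau_pos hz)
    have hpair : Tendsto (fun k : ℕ => ((qq (k : ℤ), z) : X × X)) atTop (𝓝 (r, z)) :=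
      hq'.prodMk_nhds tendsto_const_nhds
    have hcz : ∀ᶠ k : ℕ in atTop, L.causal (qq (k : ℤ)) z := by
      filter_upwards [hpair.eventually htau] with k hk
      by_contra hcon
      rw [L.tau_eq_zero hcon] at hk
      exact lt_irrefl 0 hk
    set c0 := min (dist r z) 1 with hc0def
    have hc0pos : 0 < c0 := lt_min (dist_pos.mpr (Ne.symm hzr)) one_pos
    have hc0le : c0 ≤ 1 := min_le_right _ _
    obtain ⟨N₁, hN₁⟩ := Metric.tendsto_atTop.mp hq' (c0 / 8) (by linarith)
    obtain ⟨N₂, hN₂⟩ := eventually_atTop.mp hcz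
    set k := N₁ + N₂ + 1 with hkdef
    have hk1 : (1:ℤ) ≤ (k : ℤ) := by push_cast; omega
    have e1 : dist (qq (k : ℤ)) r < c0 / 8 := hN₁ k (by omega)
    have e2 : dist (qq ((k : ℤ) + 1)) r < c0 / 8 := by
      rw [show ((k : ℤ) + 1) = ((k + 1 : ℕ) : ℤ) by push_cast; ring]
      exact hN₁ (k + 1) (by omega)
    have e3 : L.causal (qq (k : ℤ)) z := hN₂ k (by omega)
    have e4 : min (dist (qq (k : ℤ)) z) 1 ≤ L.Rp (qq (k : ℤ)) := le_Rp e3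
    have e5 := hRpF (k : ℤ) hk1
    have t1 : dist (qq (k : ℤ)) (qq ((k : ℤ) + 1)) ≤
        dist (qq (k : ℤ)) r + dist (qq ((k : ℤ) + 1)) r := dist_triangle_right _ _ _
    have t2 : c0 ≤ dist r z := min_le_left _ _
    have t3 : dist r z ≤ dist (qq (k : ℤ)) r + dist (qq (k : ℤ)) z := by
      rw [dist_comm (qq (k : ℤ)) r]
      exact dist_triangle _ _ _
    have t4 : 7 * c0 / 8 ≤ min (dist (qq (k : ℤ)) z) 1 := le_min (by linarith) (by linarith)
    have t5 : min (dist (qq (k : ℤ)) (qq ((k : ℤ) + 1))) 1 ≤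
        dist (qq (k : ℤ)) (qq ((k : ℤ) + 1)) := min_le_left _ _
    linarith
  have hBot : ∀ r : X, ¬ Tendsto γ atBot (𝓝 r) := by
    intro r hr
    obtain ⟨z, hz, hzr⟩ := exists_chron_lt (L := L) happ hlc r
    have hq' : Tendsto (fun k : ℕ => qq (-(k : ℤ))) atTop (𝓝 r) := by
      have hbase : Tendsto (fun k : ℕ => -((k : ℕ) : ℝ)) atTop atBot :=
        tendsto_neg_atTop_atBot.comp tendsto_natCast_atTop_atTop
      have h1 : Tendsto (fun k : ℕ => ((-(k : ℤ) : ℤ) : ℝ)) atTop atBot :=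
        hbase.congr (fun k => by push_cast; ring)
      have h2 : Tendsto (fun k : ℕ => γ ((-(k : ℤ) : ℤ) : ℝ)) atTop (𝓝 r) := hr.comp h1
      simpa only [hγint] using h2
    have htau : ∀ᶠ y in 𝓝 ((z, r) : X × X), 0 < L.tau y.1 y.2 :=
      L.tau_lsc (z, r) 0 (L.tau_pos hz)
    have hpair : Tendsto (fun k : ℕ => ((z, qq (-(k : ℤ))) : X × X)) atTop (𝓝 (z, r)) :=
      tendsto_const_nhds.prodMk_nhds hq'
    have hcz : ∀ᶠ k : ℕ in atTop, L.causal z (qq (-(k : ℤ))) := by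
      filter_upwards [hpair.eventually htau] with k hk
      by_contra hcon
      rw [L.tau_eq_zero hcon] at hk
      exact lt_irrefl 0 hk
    set c0 := min (dist r z) 1 with hc0def
    have hc0pos : 0 < c0 := lt_min (dist_pos.mpr (Ne.symm hzr)) one_pos
    have hc0le : c0 ≤ 1 := min_le_right _ _
    obtain ⟨N₁, hN₁⟩ := Metric.tendsto_atTop.mp hq' (c0 / 8) (by linarith)
    obtain ⟨N₂, hN₂⟩ := eventually_atTop.mp hcz
    set k := N₁ + N₂ + 1 with hkdef
    set n : ℤ := -(k : ℤ) - 1 with hndef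
    have hn : n ≤ -1 := by rw [hndef]; push_cast; omega
    have hn1 : n + 1 = -(k : ℤ) := by rw [hndef]; ring
    have e5 := hRmB n hn
    rw [hn1] at e5
    have e1 : dist (qq (-(k : ℤ))) r < c0 / 8 := hN₁ k (by omega)
    have e2 : dist (qq n) r < c0 / 8 := by
      rw [show n = -((k + 1 : ℕ) : ℤ) by rw [hndef]; push_cast; ring]
      exact hN₁ (k + 1) (by omega)
    have e3 : L.causal z (qq (-(k : ℤ))) := hN₂ k (by omega)
    have e4 : min (dist (qq (-(k : ℤ))) z) 1 ≤ L.Rm (qq (-(k : ℤ))) := le_Rm e3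
    have t1 : dist (qq (-(k : ℤ))) (qq n) ≤
        dist (qq (-(k : ℤ))) r + dist (qq n) r := dist_triangle_right _ _ _
    have t2 : c0 ≤ dist r z := min_le_left _ _
    have t3 : dist r z ≤ dist (qq (-(k : ℤ))) r + dist (qq (-(k : ℤ))) z := by
      rw [dist_comm (qq (-(k : ℤ))) r]
      exact dist_triangle _ _ _
    have t4 : 7 * c0 / 8 ≤ min (dist (qq (-(k : ℤ))) z) 1 := le_min (by linarith) (by linarith)
    have t5 : min (dist (qq (-(k : ℤ))) (qq n)) 1 ≤
        dist (qq (-(k : ℤ))) (qq n) := min_le_left _ _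
    linarith
  have hC : L.IsCausalCurveOn univ γ := by
    refine concat_isCausalCurve hcC hmatch ?_
    rw [hc0 0, hc1 0, hq0, show (0:ℤ) + 1 = 1 from rfl, hq1]
    exact hne
  have hD : L.IsDoublyInextCurve γ := ⟨hC, hTop, hBot⟩
  obtain ⟨-, huniq⟩ := hS γ hD
  have h0S : γ ((0 : ℤ) : ℝ) ∈ S := by rw [hγint 0, hq0]; exact hp
  have h1S : γ ((1 : ℤ) : ℝ) ∈ S := by rw [hγint 1, hq1]; exact hq
  have hfin := huniq ((0 : ℤ) : ℝ) ((1 : ℤ) : ℝ) h0S h1S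
  rw [hγint 0, hγint 1, hq0, hq1] at hfin
  exact hne hfin
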